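/- On the space of compact rooted measured ℝ-trees whose measure dominates the length measure, the Gromov–Prokhorov and Gromov–Hausdorff–Prokhorov distances are comparable: d_{GP}^c(𝒯, 𝒯') ≤ d_{GHP}^c(𝒯, 𝒯') ≤ 3 · d_{GP}^c(𝒯, 𝒯') for all such trees 𝒯, 𝒯'. -/

import Mathlib

/-- A compact rooted measured ℝ-tree whose measure `μ` dominates the length measure `ℓ`:
a compact, uniquely geodesic metric space without loops, with root, geodesics `γ`,
length measure `ℓ` (characterized by `ℓ(⟧a,b⟦) = d(a,b)` and `ℓ(skeletonᶜ) = 0`)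
and a finite Borel measure `μ ≥ ℓ`. -/
structure CMRTree : Type 1 where
  V : Type
  [ms : MetricSpace V]
  [mb : MeasurableSpace V]
  [bs : BorelSpace V]
  [compact : CompactSpace V]
  root : V
  μ : MeasureTheory.Measure V
  finiteμ : MeasureTheory.IsFiniteMeasure μ
  γ : V → V → ℝ → V
  geod0 : ∀ a b, γ a b 0 = a
  geod1 : ∀ a b, γ a b (dist a b) = b
  geodIso : ∀ a b, ∀ s ∈ Set.Icc (0 : ℝ) (dist a b), ∀ t ∈ Set.Icc (0 : ℝ) (dist a b),
    dist (γ a b s) (γ a b t) = |s - t|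
  geodUniq : ∀ a b (f : ℝ → V), f 0 = a → f (dist a b) = b →
    (∀ s ∈ Set.Icc (0 : ℝ) (dist a b), ∀ t ∈ Set.Icc (0 : ℝ) (dist a b),
      dist (f s) (f t) = |s - t|) →
    ∀ s ∈ Set.Icc (0 : ℝ) (dist a b), f s = γ a b s
  noLoops : ∀ a b (q r : ℝ → V), ContinuousOn q (Set.Icc 0 1) →
    ContinuousOn r (Set.Icc 0 1) → Set.InjOn q (Set.Icc 0 1) → Set.InjOn r (Set.Icc 0 1) →
    q 0 = a → q 1 = b → r 0 = a → r 1 = b → q '' Set.Icc 0 1 = r '' Set.Icc 0 1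
  ℓ : MeasureTheory.Measure V
  lenSeg : ∀ a b, ℓ (γ a b '' Set.Ioo 0 (dist a b)) = ENNReal.ofReal (dist a b)
  lenSkel : ℓ ((⋃ x, γ root x '' Set.Ico 0 (dist root x))ᶜ) = 0
  dom : ℓ ≤ μ

attribute [instance] CMRTree.ms CMRTree.mb CMRTree.bs CMRTree.compact

/-- A pair of isometric embeddings of two trees into a common complete separable metric
space `Z`. -/
structure CommonEmbedding (T T' : CMRTree) : Type 1 where
  Z : Type
  [ms : MetricSpace Z]
  [mb : MeasurableSpace Z]
  [bs : BorelSpace Z]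
  [complete : CompleteSpace Z]
  [separable : TopologicalSpace.SeparableSpace Z]
  φ : T.V → Z
  φ' : T'.V → Z
  isom : Isometry φ
  isom' : Isometry φ'

attribute [instance] CommonEmbedding.ms CommonEmbedding.mb CommonEmbedding.bs

/-- The GHP cost of a common embedding:
`d(φρ,φ'ρ') + d_H(φ𝒱,φ'𝒱') + d_P(φ_*μ,φ'_*μ')`. -/
noncomputable def CommonEmbedding.ghpCost {T T' : CMRTree} (e : CommonEmbedding T T') : ℝ :=
  dist (e.φ T.root) (e.φ' T'.root)
    + Metric.hausdorffDist (Set.range e.φ) (Set.range e.φ')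
    + MeasureTheory.levyProkhorovDist (MeasureTheory.Measure.map e.φ T.μ) (MeasureTheory.Measure.map e.φ' T'.μ)

/-- The GP cost of a common embedding: as the GHP cost but omitting the Hausdorff term. -/
noncomputable def CommonEmbedding.gpCost {T T' : CMRTree} (e : CommonEmbedding T T') : ℝ :=
  dist (e.φ T.root) (e.φ' T'.root)
    + MeasureTheory.levyProkhorovDist (MeasureTheory.Measure.map e.φ T.μ) (MeasureTheory.Measure.map e.φ' T'.μ)

/-- The Gromov–Hausdorff–Prokhorov distance `d_{GHP}^c`. -/
noncomputable def ghpDist (T T' : CMRTree) : ℝ :=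
  sInf {r : ℝ | ∃ e : CommonEmbedding T T', e.ghpCost ≤ r}

/-- The Gromov–Prokhorov distance `d_{GP}^c`. -/
noncomputable def gpDist (T T' : CMRTree) : ℝ :=
  sInf {r : ℝ | ∃ e : CommonEmbedding T T', e.gpCost ≤ r}


open MeasureTheory Metric Set

lemma CMRTree.rootDist_le (T : CMRTree) (x : T.V) :
    ENNReal.ofReal (dist T.root x) ≤ T.μ Set.univ := by
  calc ENNReal.ofReal (dist T.root x)
      = T.ℓ (T.γ T.root x '' Set.Ioo 0 (dist T.root x)) := (T.lenSeg _ _).symm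
    _ ≤ T.ℓ Set.univ := measure_mono (Set.subset_univ _)
    _ ≤ T.μ Set.univ := T.dom _

lemma CMRTree.ball_measure (T : CMRTree) (x : T.V) (t : ℝ) (ht : 0 < t) :
    min (ENNReal.ofReal t) (T.μ Set.univ) ≤ T.μ (Metric.ball x t) := by
  by_cases h : ∃ y, t ≤ dist x y
  · obtain ⟨y, hy⟩ := h
    have ht' : t ∈ Set.Icc (0:ℝ) (dist x y) := ⟨ht.le, hy⟩
    have h0 : (0:ℝ) ∈ Set.Icc (0:ℝ) (dist x y) := ⟨le_refl _, dist_nonneg⟩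
    set b := T.γ x y t with hb
    have hdb : dist x b = t := by
      have h1 := T.geodIso x y 0 h0 t ht'
      rw [T.geod0] at h1
      rw [h1]; rw [abs_of_nonpos (by linarith)]; ring
    have hsub : T.γ x b '' Set.Ioo 0 (dist x b) ⊆ Metric.ball x t := by
      rintro _ ⟨s, hs, rfl⟩
      rw [hdb] at hs
      obtain ⟨hs1, hs2⟩ := hs
      have hs' : s ∈ Set.Icc (0:ℝ) (dist x b) := ⟨hs1.le, by rw [hdb]; exact hs2.le⟩
      have h0' : (0:ℝ) ∈ Set.Icc (0:ℝ) (dist x b) := ⟨le_refl _, dist_nonneg⟩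
      have h2 := T.geodIso x b 0 h0' s hs'
      rw [T.geod0] at h2
      simp only [Metric.mem_ball, dist_comm]
      rw [h2, abs_of_nonpos (by linarith)]
      linarith
    calc min (ENNReal.ofReal t) (T.μ Set.univ) ≤ ENNReal.ofReal t := min_le_left _ _
      _ = T.ℓ (T.γ x b '' Set.Ioo 0 (dist x b)) := by rw [T.lenSeg x b, hdb]
      _ ≤ T.ℓ (Metric.ball x t) := measure_mono hsub
      _ ≤ T.μ (Metric.ball x t) := T.dom _
  · push_neg at h
    have : Metric.ball x t = Set.univ := by
      ext y; simp only [Metric.mem_ball, Set.mem_univ, iff_true]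
      rw [dist_comm]; exact h y
    rw [this]
    exact min_le_right _ _

/-- The swap of a common embedding. -/
noncomputable def CommonEmbedding.swap {T T' : CMRTree} (e : CommonEmbedding T T') :
    CommonEmbedding T' T :=
  { Z := e.Z, ms := e.ms, mb := e.mb, bs := e.bs, complete := e.complete,
    separable := e.separable, φ := e.φ', φ' := e.φ, isom := e.isom', isom' := e.isom }

lemma thickening_ball_subset {Z : Type} [MetricSpace Z] (z : Z) (t δ : ℝ) :
    Metric.thickening δ (Metric.ball z t) ⊆ Metric.ball z (t + δ) := by
  rw [Metric.thickening_eq_biUnion_ball]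
  rintro w hw
  simp only [Set.mem_iUnion] at hw
  obtain ⟨v, hv, hw⟩ := hw
  rw [Metric.mem_ball] at *
  calc dist w z ≤ dist w v + dist v z := dist_triangle _ _ _
    _ < δ + t := add_lt_add hw hv
    _ = t + δ := by ring

lemma CommonEmbedding.point_bound {T T' : CMRTree} (e : CommonEmbedding T T') {δ η : ℝ}
    (hδ : MeasureTheory.levyProkhorovDist (MeasureTheory.Measure.map e.φ T.μ)
        (MeasureTheory.Measure.map e.φ' T'.μ) < δ) (hη : 0 < η) (x : T.V) :
    ∃ x', dist (e.φ x) (e.φ' x') ≤ dist (e.φ T.root) (e.φ' T'.root) + 2 * δ + η := by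
  haveI := T.finiteμ; haveI := T'.finiteμ
  have hφm : Measurable e.φ := e.isom.continuous.measurable
  have hφ'm : Measurable e.φ' := e.isom'.continuous.measurable
  have hδ0 : 0 ≤ δ := le_of_lt (lt_of_le_of_lt ENNReal.toReal_nonneg hδ)
  have ha0 : (0:ℝ) ≤ dist (e.φ T.root) (e.φ' T'.root) := dist_nonneg
  set t : ℝ := δ + η with htdef
  have ht : 0 < t := by positivity
  by_cases hcase : T.μ Set.univ ≤ ENNReal.ofReal t
  · -- small total mass: the whole tree is within t of the root
    refine ⟨T'.root, ?_⟩
    have hrx : dist T.root x ≤ t := by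
      rw [← ENNReal.ofReal_le_ofReal_iff ht.le]
      exact le_trans (T.rootDist_le x) hcase
    calc dist (e.φ x) (e.φ' T'.root)
        ≤ dist (e.φ x) (e.φ T.root) + dist (e.φ T.root) (e.φ' T'.root) := dist_triangle _ _ _
      _ = dist x T.root + dist (e.φ T.root) (e.φ' T'.root) := by rw [e.isom.dist_eq]
      _ ≤ t + dist (e.φ T.root) (e.φ' T'.root) := by
          rw [dist_comm]; exact add_le_add hrx le_rfl
      _ ≤ dist (e.φ T.root) (e.φ' T'.root) + 2 * δ + η := by
          rw [htdef]; linarith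
  · push_neg at hcase
    -- edist bound
    haveI : MeasureTheory.IsFiniteMeasure (MeasureTheory.Measure.map e.φ T.μ) :=
      MeasureTheory.Measure.isFiniteMeasure_map _ _
    haveI : MeasureTheory.IsFiniteMeasure (MeasureTheory.Measure.map e.φ' T'.μ) :=
      MeasureTheory.Measure.isFiniteMeasure_map _ _
    have hedist : MeasureTheory.levyProkhorovEDist (MeasureTheory.Measure.map e.φ T.μ)
        (MeasureTheory.Measure.map e.φ' T'.μ) < ENNReal.ofReal δ := by
      rw [ENNReal.lt_ofReal_iff_toReal_lt (MeasureTheory.levyProkhorovEDist_ne_top _ _)]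
      exact hδ
    have hkey := MeasureTheory.left_measure_le_of_levyProkhorovEDist_lt hedist
      (B := Metric.ball (e.φ x) t) Metric.isOpen_ball.measurableSet
    rw [ENNReal.toReal_ofReal hδ0] at hkey
    -- the ball in V
    have hpre : e.φ ⁻¹' (Metric.ball (e.φ x) t) = Metric.ball x t := by
      ext y; simp only [Set.mem_preimage, Metric.mem_ball, e.isom.dist_eq]
    have hν : ENNReal.ofReal t ≤ (MeasureTheory.Measure.map e.φ T.μ) (Metric.ball (e.φ x) t) := by
      rw [MeasureTheory.Measure.map_apply hφm Metric.isOpen_ball.measurableSet, hpre]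
      have := T.ball_measure x t ht
      rwa [min_eq_left hcase.le] at this
    have hν' : (MeasureTheory.Measure.map e.φ' T'.μ) (Metric.ball (e.φ x) (t + δ)) ≠ 0 := by
      intro hzero
      have hmono : (MeasureTheory.Measure.map e.φ' T'.μ)
          (Metric.thickening δ (Metric.ball (e.φ x) t)) = 0 :=
        MeasureTheory.measure_mono_null (thickening_ball_subset _ _ _) hzero
      rw [hmono, zero_add] at hkey
      have : ENNReal.ofReal t ≤ ENNReal.ofReal δ := le_trans hν hkey
      rw [ENNReal.ofReal_le_ofReal_iff hδ0] at this
      linarith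
    rw [MeasureTheory.Measure.map_apply hφ'm Metric.isOpen_ball.measurableSet] at hν'
    have hne : (e.φ' ⁻¹' Metric.ball (e.φ x) (t + δ)).Nonempty := by
      rcases Set.eq_empty_or_nonempty (e.φ' ⁻¹' Metric.ball (e.φ x) (t + δ)) with hemp | hne
      · rw [hemp] at hν'; simp at hν'
      · exact hne
    obtain ⟨x', hx'⟩ := hne
    refine ⟨x', ?_⟩
    rw [Set.mem_preimage, Metric.mem_ball, dist_comm] at hx'
    calc dist (e.φ x) (e.φ' x') ≤ t + δ := hx'.le
      _ ≤ dist (e.φ T.root) (e.φ' T'.root) + 2 * δ + η := by rw [htdef]; linarith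

lemma CommonEmbedding.hausdorff_bound {T T' : CMRTree} (e : CommonEmbedding T T') :
    Metric.hausdorffDist (Set.range e.φ) (Set.range e.φ') ≤
      dist (e.φ T.root) (e.φ' T'.root) +
        2 * MeasureTheory.levyProkhorovDist (MeasureTheory.Measure.map e.φ T.μ)
          (MeasureTheory.Measure.map e.φ' T'.μ) := by
  set a := dist (e.φ T.root) (e.φ' T'.root) with hadef
  set p := MeasureTheory.levyProkhorovDist (MeasureTheory.Measure.map e.φ T.μ)
      (MeasureTheory.Measure.map e.φ' T'.μ) with hpdef
  have ha0 : 0 ≤ a := dist_nonneg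
  have hp0 : 0 ≤ p := ENNReal.toReal_nonneg
  refine le_of_forall_pos_le_add ?_
  intro ε hε
  have hδ : p < p + ε / 3 := by linarith
  have hη : (0:ℝ) < ε / 3 := by linarith
  refine Metric.hausdorffDist_le_of_mem_dist (by linarith) ?_ ?_
  · rintro _ ⟨x, rfl⟩
    obtain ⟨x', hx'⟩ := e.point_bound hδ hη x
    exact ⟨e.φ' x', Set.mem_range_self x', by rw [← hadef] at hx'; linarith⟩
  · rintro _ ⟨x', rfl⟩
    have hδ' : MeasureTheory.levyProkhorovDist (MeasureTheory.Measure.map e.swap.φ T'.μ)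
        (MeasureTheory.Measure.map e.swap.φ' T.μ) < p + ε / 3 := by
      have : MeasureTheory.levyProkhorovDist (MeasureTheory.Measure.map e.φ' T'.μ)
          (MeasureTheory.Measure.map e.φ T.μ) = p := by
        rw [hpdef, MeasureTheory.levyProkhorovDist_comm]
      exact this ▸ hδ
    obtain ⟨x, hx⟩ := e.swap.point_bound hδ' hη x'
    refine ⟨e.φ x, Set.mem_range_self x, ?_⟩
    have : dist (e.φ' x') (e.φ x) ≤ dist (e.φ' T'.root) (e.φ T.root) + 2 * (p + ε / 3) + ε / 3 := hx
    rw [dist_comm (e.φ' T'.root)] at this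
    rw [← hadef] at this
    linarith

lemma CommonEmbedding.gpCost_nonneg {T T' : CMRTree} (e : CommonEmbedding T T') :
    0 ≤ e.gpCost :=
  add_nonneg dist_nonneg ENNReal.toReal_nonneg

lemma CommonEmbedding.ghpCost_nonneg {T T' : CMRTree} (e : CommonEmbedding T T') :
    0 ≤ e.ghpCost :=
  add_nonneg (add_nonneg dist_nonneg Metric.hausdorffDist_nonneg) ENNReal.toReal_nonneg

lemma CommonEmbedding.gpCost_le_ghpCost {T T' : CMRTree} (e : CommonEmbedding T T') :
    e.gpCost ≤ e.ghpCost := by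
  unfold CommonEmbedding.gpCost CommonEmbedding.ghpCost
  have := Metric.hausdorffDist_nonneg (s := Set.range e.φ) (t := Set.range e.φ')
  linarith

lemma CommonEmbedding.ghpCost_le_three_gpCost {T T' : CMRTree} (e : CommonEmbedding T T') :
    e.ghpCost ≤ 3 * e.gpCost := by
  have h := e.hausdorff_bound
  have ha0 : (0:ℝ) ≤ dist (e.φ T.root) (e.φ' T'.root) := dist_nonneg
  have hp0 : (0:ℝ) ≤ MeasureTheory.levyProkhorovDist (MeasureTheory.Measure.map e.φ T.μ)
      (MeasureTheory.Measure.map e.φ' T'.μ) := ENNReal.toReal_nonneg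
  unfold CommonEmbedding.ghpCost CommonEmbedding.gpCost
  linarith

/-- on compact rooted measured ℝ-trees whose measure dominates the length
measure, `d_{GP}^c ≤ d_{GHP}^c ≤ 3 d_{GP}^c`. -/
theorem stmt_18 (T T' : CMRTree) :
    gpDist T T' ≤ ghpDist T T' ∧ ghpDist T T' ≤ 3 * gpDist T T' := by
  by_cases hne : Nonempty (CommonEmbedding T T')
  · obtain ⟨e⟩ := hne
    have hgpne : {r : ℝ | ∃ e : CommonEmbedding T T', e.gpCost ≤ r}.Nonempty :=
      ⟨e.gpCost, e, le_refl _⟩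
    have hghpne : {r : ℝ | ∃ e : CommonEmbedding T T', e.ghpCost ≤ r}.Nonempty :=
      ⟨e.ghpCost, e, le_refl _⟩
    have hgpbdd : BddBelow {r : ℝ | ∃ e : CommonEmbedding T T', e.gpCost ≤ r} :=
      ⟨0, fun r ⟨e', he'⟩ => le_trans e'.gpCost_nonneg he'⟩
    have hghpbdd : BddBelow {r : ℝ | ∃ e : CommonEmbedding T T', e.ghpCost ≤ r} :=
      ⟨0, fun r ⟨e', he'⟩ => le_trans e'.ghpCost_nonneg he'⟩
    constructor
    · apply csInf_le_csInf hgpbdd hghpne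
      rintro r ⟨e', he'⟩
      exact ⟨e', le_trans e'.gpCost_le_ghpCost he'⟩
    · have hlb : ∀ r ∈ {r : ℝ | ∃ e : CommonEmbedding T T', e.gpCost ≤ r},
          ghpDist T T' / 3 ≤ r := by
        rintro r ⟨e', he'⟩
        have h1 : ghpDist T T' ≤ 3 * r := by
          apply csInf_le hghpbdd
          exact ⟨e', le_trans e'.ghpCost_le_three_gpCost (by linarith)⟩
        linarith
      have := le_csInf hgpne hlb
      unfold gpDist ghpDist at *
      linarith
  · have h1 : {r : ℝ | ∃ e : CommonEmbedding T T', e.gpCost ≤ r} = ∅ := by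
      ext r; simp only [Set.mem_setOf_eq, Set.mem_empty_iff_false, iff_false]
      rintro ⟨e, -⟩; exact hne ⟨e⟩
    have h2 : {r : ℝ | ∃ e : CommonEmbedding T T', e.ghpCost ≤ r} = ∅ := by
      ext r; simp only [Set.mem_setOf_eq, Set.mem_empty_iff_false, iff_false]
      rintro ⟨e, -⟩; exact hne ⟨e⟩
    unfold gpDist ghpDist
    rw [h1, h2, Real.sInf_empty]
    norm_num
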